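/- arXiv:2105.14588 — 4 statements merged into one kernel-verified Lean document; each statement's English description precedes it below -/
import Mathlib

section
/- Let k < 0 and let r > 0. Define 𝔧(t) = cosh(√|k| t) + ((1 - cosh(√|k| r))/sinh(√|k| r)) · sinh(√|k| t) for t ∈ [0, r]. Then ∫₀^r (𝔧'(t)² − k·𝔧(t)²) dt = 2√|k| · tanh(√|k| r / 2), i.e., the one-dimensional index-form integral of 𝔧 equals G(k, r). -/
open Real

/-- For `k < 0` and `r > 0`, the one-dimensional index-form integral of the comparison
function `𝔧(t) = cosh(√|k| t) + ((1 - cosh(√|k| r))/sinh(√|k| r)) · sinh(√|k| t)`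
equals `G(k, r) = 2√|k| · tanh(√|k| r / 2)`. -/
theorem index_form_integral_neg_curvature (k r : ℝ) (hk : k < 0) (hr : 0 < r)
    (j : ℝ → ℝ)
    (hj : ∀ t, j t = Real.cosh (Real.sqrt |k| * t) +
      ((1 - Real.cosh (Real.sqrt |k| * r)) / Real.sinh (Real.sqrt |k| * r)) *
        Real.sinh (Real.sqrt |k| * t)) :
    ∫ t in (0 : ℝ)..r, ((deriv j t) ^ 2 - k * (j t) ^ 2) =
      2 * Real.sqrt |k| * Real.tanh (Real.sqrt |k| * r / 2) := by
  set s : ℝ := Real.sqrt |k| with hs_def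
  have hs : 0 < s := Real.sqrt_pos.2 (abs_pos.2 hk.ne)
  have hs2 : s ^ 2 = -k := by
    rw [hs_def, Real.sq_sqrt (abs_nonneg k), abs_of_neg hk]
  have hsr : 0 < s * r := mul_pos hs hr
  have hσ : Real.sinh (s * r) ≠ 0 := ne_of_gt (Real.sinh_pos_iff.2 hsr)
  set A : ℝ := (1 - Real.cosh (s * r)) / Real.sinh (s * r) with hA_def
  have hjfun : j = fun t => Real.cosh (s * t) + A * Real.sinh (s * t) := funext hj
  -- derivatives of the building blocks
  have h1 : ∀ t : ℝ, HasDerivAt (fun u => Real.cosh (s * u)) (s * Real.sinh (s * t)) t := by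
    intro t
    have hlin : HasDerivAt (fun u : ℝ => s * u) s t := by
      simpa using (hasDerivAt_id t).const_mul s
    have h := hlin.cosh
    convert h using 1
    ring
  have h2 : ∀ t : ℝ, HasDerivAt (fun u => Real.sinh (s * u)) (s * Real.cosh (s * t)) t := by
    intro t
    have hlin : HasDerivAt (fun u : ℝ => s * u) s t := by
      simpa using (hasDerivAt_id t).const_mul s
    have h := hlin.sinh
    convert h using 1
    ring
  set g : ℝ → ℝ := fun t => s * Real.sinh (s * t) + A * (s * Real.cosh (s * t)) with hg_def
  have hj' : ∀ t : ℝ, HasDerivAt j (g t) t := by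
    intro t
    rw [hjfun]
    exact (h1 t).add ((h2 t).const_mul A)
  have hg' : ∀ t : ℝ, HasDerivAt g (s ^ 2 * j t) t := by
    intro t
    have h := (((h2 t).const_mul s)).add (((h1 t).const_mul s).const_mul A)
    have heq : s * (s * Real.cosh (s * t)) + A * (s * (s * Real.sinh (s * t)))
        = s ^ 2 * j t := by
      rw [hj t]; ring
    rw [heq] at h
    exact h
  have hdj : deriv j = g := funext fun t => (hj' t).deriv
  -- antiderivative
  set F : ℝ → ℝ := fun t => j t * g t with hF_def
  have hF : ∀ t : ℝ, HasDerivAt F (g t ^ 2 - k * j t ^ 2) t := by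
    intro t
    have h := (hj' t).mul (hg' t)
    have heq : g t * g t + j t * (s ^ 2 * j t) = g t ^ 2 - k * j t ^ 2 := by
      rw [show k = -(s ^ 2) by linarith]; ring
    rw [heq] at h
    exact h
  have hcont : Continuous fun t : ℝ => g t ^ 2 - k * j t ^ 2 := by
    rw [hjfun]
    fun_prop
  have hint : ∫ t in (0 : ℝ)..r, (g t ^ 2 - k * j t ^ 2) = F r - F 0 :=
    intervalIntegral.integral_eq_sub_of_hasDerivAt (fun t _ => hF t)
      (hcont.intervalIntegrable 0 r)
  simp only [hdj]
  rw [hint, hF_def]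
  simp only [hjfun, hg_def, mul_zero, Real.cosh_zero, Real.sinh_zero]
  -- now pure algebra
  have hch : Real.cosh (s * r) = 2 * Real.cosh (s * r / 2) ^ 2 - 1 := by
    have h := Real.cosh_two_mul (s * r / 2)
    rw [show 2 * (s * r / 2) = s * r by ring] at h
    have hid0 := Real.cosh_sq_sub_sinh_sq (s * r / 2)
    linarith
  have hsh : Real.sinh (s * r) = 2 * Real.sinh (s * r / 2) * Real.cosh (s * r / 2) := by
    have h := Real.sinh_two_mul (s * r / 2)
    rwa [show 2 * (s * r / 2) = s * r by ring] at h
  set ch := Real.cosh (s * r / 2) with hch_def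
  set sh := Real.sinh (s * r / 2) with hsh_def
  have hchpos : 0 < ch := by rw [hch_def]; exact Real.cosh_pos _
  have hshpos : 0 < sh := by rw [hsh_def]; exact Real.sinh_pos_iff.2 (by positivity)
  have hid : ch ^ 2 - sh ^ 2 = 1 := by
    rw [hch_def, hsh_def]; exact Real.cosh_sq_sub_sinh_sq _
  rw [Real.tanh_eq_sinh_div_cosh, ← hch_def, ← hsh_def, hA_def, hch, hsh]
  have hch0 : ch ≠ 0 := ne_of_gt hchpos
  have hsh0 : sh ≠ 0 := ne_of_gt hshpos
  field_simp
  linear_combination (-4 * s * (ch ^ 2 - 1)) * hid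
end

section
/- Fix r > 0. The function k ↦ G(k, r) is concave on the interval (−∞, π²/r²): for all k₁, k₂ < π²/r² and all λ ∈ [0,1], one has G(λk₁ + (1−λ)k₂, r) ≥ λ·G(k₁, r) + (1−λ)·G(k₂, r). -/
open Real

/-- The comparison function `G` from Chen–Wang:
`G(k,r) = −2√k tan(√k r/2)` for `k > 0`, `G(0,r) = 0`,
and `G(k,r) = 2√|k| tanh(√|k| r/2)` for `k < 0`. -/
noncomputable def G (k r : ℝ) : ℝ :=
  if 0 < k then -2 * Real.sqrt k * Real.tan (Real.sqrt k * r / 2)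
  else if k = 0 then 0
  else 2 * Real.sqrt |k| * Real.tanh (Real.sqrt |k| * r / 2)

open Set Filter Topology


lemma my_tanh_hasDerivAt (x : ℝ) : HasDerivAt Real.tanh (1 - Real.tanh x ^ 2) x := by
  have h : HasDerivAt (fun t => Real.sinh t / Real.cosh t)
      ((Real.cosh x * Real.cosh x - Real.sinh x * Real.sinh x) / Real.cosh x ^ 2) x :=
    (Real.hasDerivAt_sinh x).div (Real.hasDerivAt_cosh x) (ne_of_gt (Real.cosh_pos x))
  have heq : (fun t => Real.sinh t / Real.cosh t) = Real.tanh := by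
    funext t; rw [Real.tanh_eq_sinh_div_cosh]
  rw [heq] at h
  convert h using 1
  have hc := Real.cosh_pos x
  rw [Real.tanh_eq_sinh_div_cosh]
  have h2 := Real.cosh_sq_sub_sinh_sq x
  field_simp

lemma my_sinh_le_mul_cosh {x : ℝ} (hx : 0 ≤ x) : Real.sinh x ≤ x * Real.cosh x := by
  have h : MonotoneOn (fun t : ℝ => t * Real.cosh t - Real.sinh t) (Ici 0) := by
    apply monotoneOn_of_hasDerivWithinAt_nonneg (convex_Ici 0)
      (f' := fun t => t * Real.sinh t)
    · intro t ht
      exact (((hasDerivAt_id t).mul (Real.hasDerivAt_cosh t)).sub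
        (Real.hasDerivAt_sinh t)).continuousAt.continuousWithinAt
    · intro t ht
      have := ((hasDerivAt_id t).mul (Real.hasDerivAt_cosh t)).sub (Real.hasDerivAt_sinh t)
      have h2 : 1 * Real.cosh t + id t * Real.sinh t - Real.cosh t = t * Real.sinh t := by
        simp only [id_eq]; ring
      rw [h2] at this
      exact this.hasDerivWithinAt
    · intro t ht
      rw [interior_Ici] at ht
      exact mul_nonneg (le_of_lt ht) (Real.sinh_nonneg_iff.mpr (le_of_lt ht))
  have := h self_mem_Ici hx hx
  simp only [Real.cosh_zero, Real.sinh_zero, mul_zero, zero_mul, sub_zero] at this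
  linarith

lemma my_tanh_le_self {x : ℝ} (hx : 0 ≤ x) : Real.tanh x ≤ x := by
  rw [Real.tanh_eq_sinh_div_cosh, div_le_iff₀ (Real.cosh_pos x)]
  have := my_sinh_le_mul_cosh hx
  linarith

lemma my_hyp_key {t : ℝ} (ht : 0 < t) : t * (1 - Real.tanh t ^ 2) ≤ Real.tanh t := by
  have hc := Real.cosh_pos t
  have hs : t < Real.sinh t := Real.self_lt_sinh_iff.mpr ht
  have h1 : (1 : ℝ) ≤ Real.cosh t := Real.one_le_cosh t
  have h2 := Real.cosh_sq_sub_sinh_sq t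
  rw [Real.tanh_eq_sinh_div_cosh]
  rw [div_eq_mul_inv]
  have hc2 : (0:ℝ) < Real.cosh t ^ 2 := by positivity
  rw [← sub_nonneg]
  have key : Real.sinh t * Real.cosh t - t ≥ 0 := by nlinarith
  have expand : Real.sinh t * (Real.cosh t)⁻¹ - t * (1 - (Real.sinh t * (Real.cosh t)⁻¹) ^ 2)
      = (Real.sinh t * Real.cosh t - t) / Real.cosh t ^ 2 := by
    field_simp
    nlinarith
  rw [expand]
  positivity

lemma my_trig_key {t : ℝ} (ht : 0 < t) (ht2 : t < π / 2) :
    Real.tan t ≤ t * (1 + Real.tan t ^ 2) := by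
  have hc : 0 < Real.cos t := Real.cos_pos_of_mem_Ioo ⟨by linarith [Real.pi_pos], ht2⟩
  have hs : Real.sin t ≤ t := Real.sin_le ht.le
  have hsn : 0 ≤ Real.sin t := Real.sin_nonneg_of_nonneg_of_le_pi ht.le
    (by linarith [Real.pi_pos])
  have hc1 : Real.cos t ≤ 1 := Real.cos_le_one t
  rw [Real.tan_eq_sin_div_cos, ← sub_nonneg]
  have expand : t * (1 + (Real.sin t / Real.cos t) ^ 2) - Real.sin t / Real.cos t
      = (t - Real.sin t * Real.cos t) / Real.cos t ^ 2 := by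
    field_simp
    nlinarith [Real.sin_sq_add_cos_sq t]
  rw [expand]
  have h0 : 0 ≤ t - Real.sin t * Real.cos t := by nlinarith
  exact div_nonneg h0 (by positivity)

noncomputable def myQ (t : ℝ) : ℝ := Real.tanh t / t + 1 - Real.tanh t ^ 2
noncomputable def myP (t : ℝ) : ℝ := Real.tan t / t + 1 + Real.tan t ^ 2

lemma myQ_hasDerivAt {t : ℝ} (ht : 0 < t) :
    HasDerivAt myQ (((1 - Real.tanh t ^ 2) * t - Real.tanh t * 1) / t ^ 2
      - 2 * Real.tanh t ^ 1 * (1 - Real.tanh t ^ 2)) t := by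
  have h1 : HasDerivAt (fun u : ℝ => Real.tanh u / u)
      (((1 - Real.tanh t ^ 2) * t - Real.tanh t * 1) / t ^ 2) t :=
    (my_tanh_hasDerivAt t).div (hasDerivAt_id t) (ne_of_gt ht)
  have h2 : HasDerivAt (fun u : ℝ => Real.tanh u ^ 2)
      (2 * Real.tanh t ^ 1 * (1 - Real.tanh t ^ 2)) t := by
    have e : 2 * Real.tanh t ^ 1 * (1 - Real.tanh t ^ 2) = ∑ i ∈ Finset.range 2,
        Real.tanh t ^ (Nat.pred 2 - i) * (1 - Real.tanh t ^ 2) * Real.tanh t ^ i := by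
      simp [Finset.sum_range_succ]
      ring
    rw [e]
    exact (my_tanh_hasDerivAt t).fun_pow' 2
  exact (h1.add_const 1).sub h2

lemma myQ_antitone : AntitoneOn myQ (Ioi 0) := by
  apply antitoneOn_of_hasDerivWithinAt_nonpos (convex_Ioi 0)
    (f' := fun t => ((1 - Real.tanh t ^ 2) * t - Real.tanh t * 1) / t ^ 2
      - 2 * Real.tanh t ^ 1 * (1 - Real.tanh t ^ 2))
  · intro t ht
    exact (myQ_hasDerivAt ht).continuousAt.continuousWithinAt
  · intro t ht
    rw [interior_Ioi] at ht
    exact (myQ_hasDerivAt ht).hasDerivWithinAt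
  · intro t ht
    rw [interior_Ioi] at ht
    have hkey := my_hyp_key ht
    have htanh : 0 ≤ Real.tanh t := by
      rw [Real.tanh_eq_sinh_div_cosh]
      exact div_nonneg (Real.sinh_nonneg_iff.mpr ht.le) (Real.cosh_pos t).le
    have htanh1 : Real.tanh t ^ 2 ≤ 1 := by
      have hc := Real.cosh_pos t
      have h2 := Real.cosh_sq_sub_sinh_sq t
      rw [Real.tanh_eq_sinh_div_cosh, div_pow]
      rw [div_le_one (by positivity)]
      nlinarith
    have ht' : (0:ℝ) < t := ht
    have ht2 : (0:ℝ) < t ^ 2 := by positivity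
    have term1 : ((1 - Real.tanh t ^ 2) * t - Real.tanh t * 1) / t ^ 2 ≤ 0 := by
      apply div_nonpos_of_nonpos_of_nonneg _ ht2.le
      nlinarith
    nlinarith

lemma myP_hasDerivAt {t : ℝ} (ht : 0 < t) (ht2 : t < π / 2) :
    HasDerivAt myP ((1 / Real.cos t ^ 2 * t - Real.tan t * 1) / t ^ 2
      + 2 * Real.tan t ^ 1 * (1 / Real.cos t ^ 2)) t := by
  have hc : Real.cos t ≠ 0 :=
    (Real.cos_pos_of_mem_Ioo ⟨by linarith [Real.pi_pos], ht2⟩).ne'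
  have htan := Real.hasDerivAt_tan hc
  have h1 : HasDerivAt (fun u : ℝ => Real.tan u / u)
      ((1 / Real.cos t ^ 2 * t - Real.tan t * 1) / t ^ 2) t :=
    htan.div (hasDerivAt_id t) (ne_of_gt ht)
  have h2 : HasDerivAt (fun u : ℝ => Real.tan u ^ 2)
      (2 * Real.tan t ^ 1 * (1 / Real.cos t ^ 2)) t := by
    have e : 2 * Real.tan t ^ 1 * (1 / Real.cos t ^ 2) = ∑ i ∈ Finset.range 2,
        Real.tan t ^ (Nat.pred 2 - i) * (1 / Real.cos t ^ 2) * Real.tan t ^ i := by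
      simp [Finset.sum_range_succ]
      ring
    rw [e]
    exact htan.fun_pow' 2
  exact (h1.add_const 1).add h2

lemma myP_monotone : MonotoneOn myP (Ioo 0 (π / 2)) := by
  apply monotoneOn_of_hasDerivWithinAt_nonneg (convex_Ioo 0 (π / 2))
    (f' := fun t => (1 / Real.cos t ^ 2 * t - Real.tan t * 1) / t ^ 2
      + 2 * Real.tan t ^ 1 * (1 / Real.cos t ^ 2))
  · intro t ht
    exact (myP_hasDerivAt ht.1 ht.2).continuousAt.continuousWithinAt
  · intro t ht
    rw [interior_Ioo] at ht
    exact (myP_hasDerivAt ht.1 ht.2).hasDerivWithinAt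
  · intro t ht
    rw [interior_Ioo] at ht
    obtain ⟨ht1, ht2⟩ := ht
    have hc : 0 < Real.cos t := Real.cos_pos_of_mem_Ioo ⟨by linarith [Real.pi_pos], ht2⟩
    have hsec : 1 / Real.cos t ^ 2 = 1 + Real.tan t ^ 2 := by
      rw [Real.tan_eq_sin_div_cos, div_pow]
      have h := Real.sin_sq_add_cos_sq t
      field_simp
      linarith
    have hkey := my_trig_key ht1 ht2
    have htan : 0 ≤ Real.tan t := Real.tan_nonneg_of_nonneg_of_le_pi_div_two ht1.le (by linarith)
    have ht2' : (0:ℝ) < t ^ 2 := by positivity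
    have term1 : 0 ≤ (1 / Real.cos t ^ 2 * t - Real.tan t * 1) / t ^ 2 := by
      apply div_nonneg _ ht2'.le
      rw [hsec]
      nlinarith
    have term2 : 0 ≤ 2 * Real.tan t ^ 1 * (1 / Real.cos t ^ 2) := by
      rw [hsec]; nlinarith
    linarith

lemma myP_ge_two {t : ℝ} (ht : 0 < t) (ht2 : t < π / 2) : 2 ≤ myP t := by
  have htan : t ≤ Real.tan t := (Real.lt_tan ht ht2).le
  have h1 : 1 ≤ Real.tan t / t := (le_div_iff₀ ht).mpr (by linarith)
  have h2 : 0 ≤ Real.tan t ^ 2 := sq_nonneg _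
  simp only [myP]; linarith

lemma myQ_le_two {t : ℝ} (ht : 0 < t) : myQ t ≤ 2 := by
  have h1 : Real.tanh t / t ≤ 1 := (div_le_one ht).mpr (my_tanh_le_self ht.le)
  have h2 : 0 ≤ Real.tanh t ^ 2 := sq_nonneg _
  simp only [myQ]; linarith

lemma my_sqrt_bound {r k : ℝ} (hr : 0 < r) (hk : 0 < k) (hk2 : k < π ^ 2 / r ^ 2) :
    Real.sqrt k * r / 2 < π / 2 := by
  have h1 : Real.sqrt k < Real.sqrt (π ^ 2 / r ^ 2) := Real.sqrt_lt_sqrt hk.le hk2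
  have h2 : Real.sqrt (π ^ 2 / r ^ 2) = π / r := by
    rw [← div_pow, Real.sqrt_sq (by positivity : (0:ℝ) ≤ π / r)]
  rw [h2] at h1
  have h3 : Real.sqrt k * r < π := (lt_div_iff₀ hr).mp h1
  linarith

lemma G_hasDerivAt_pos {r k : ℝ} (hr : 0 < r) (hk : 0 < k) (hk2 : k < π ^ 2 / r ^ 2) :
    HasDerivAt (fun k => G k r) (-(r / 2) * myP (Real.sqrt k * r / 2)) k := by
  have hs : 0 < Real.sqrt k := Real.sqrt_pos.mpr hk
  set t := Real.sqrt k * r / 2 with hts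
  have ht : 0 < t := by positivity
  have htlt : t < π / 2 := my_sqrt_bound hr hk hk2
  have hcos : 0 < Real.cos t := Real.cos_pos_of_mem_Ioo ⟨by linarith [Real.pi_pos], htlt⟩
  have hinner : HasDerivAt (fun x : ℝ => Real.sqrt x * r / 2) (1 / (2 * Real.sqrt k) * r / 2) k :=
    ((Real.hasDerivAt_sqrt hk.ne').mul_const r).div_const 2
  have htan : HasDerivAt (fun x : ℝ => Real.tan (Real.sqrt x * r / 2))
      (1 / Real.cos t ^ 2 * (1 / (2 * Real.sqrt k) * r / 2)) k :=
    HasDerivAt.comp (h₂ := Real.tan) k (Real.hasDerivAt_tan hcos.ne') hinner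
  have hleft : HasDerivAt (fun x : ℝ => -2 * Real.sqrt x) (-2 * (1 / (2 * Real.sqrt k))) k :=
    (Real.hasDerivAt_sqrt hk.ne').const_mul (-2)
  have hmul := hleft.mul htan
  have heq : (fun x => G x r) =ᶠ[𝓝 k] fun x => -2 * Real.sqrt x * Real.tan (Real.sqrt x * r / 2) := by
    filter_upwards [Ioi_mem_nhds hk] with x hx
    have hx' : 0 < x := hx
    simp only [G, if_pos hx']
  have hval : -2 * (1 / (2 * Real.sqrt k)) * Real.tan t
      + -2 * Real.sqrt k * (1 / Real.cos t ^ 2 * (1 / (2 * Real.sqrt k) * r / 2))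
      = -(r / 2) * myP t := by
    have hsec : 1 / Real.cos t ^ 2 = 1 + Real.tan t ^ 2 := by
      rw [Real.tan_eq_sin_div_cos, div_pow]
      have h := Real.sin_sq_add_cos_sq t
      field_simp
      linarith
    rw [hsec, myP, hts]
    field_simp
    ring
  rw [← hval]
  exact (HasDerivAt.congr_of_eventuallyEq hmul heq)

lemma G_hasDerivAt_neg {r k : ℝ} (hr : 0 < r) (hk : k < 0) :
    HasDerivAt (fun k => G k r) (-(r / 2) * myQ (Real.sqrt (-k) * r / 2)) k := by
  have hk' : 0 < -k := by linarith
  have hs : 0 < Real.sqrt (-k) := Real.sqrt_pos.mpr hk'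
  set t := Real.sqrt (-k) * r / 2 with hts
  have ht : 0 < t := by positivity
  have hneg : HasDerivAt (fun x : ℝ => -x) (-1 : ℝ) k := by
    exact hasDerivAt_neg' (x := k)
  have hsq : HasDerivAt (fun x : ℝ => Real.sqrt (-x)) (1 / (2 * Real.sqrt (-k)) * (-1)) k :=
    (Real.hasDerivAt_sqrt hk'.ne').comp k hneg
  have hinner : HasDerivAt (fun x : ℝ => Real.sqrt (-x) * r / 2)
      (1 / (2 * Real.sqrt (-k)) * (-1) * r / 2) k := (hsq.mul_const r).div_const 2
  have htanh : HasDerivAt (fun x : ℝ => Real.tanh (Real.sqrt (-x) * r / 2))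
      ((1 - Real.tanh t ^ 2) * (1 / (2 * Real.sqrt (-k)) * (-1) * r / 2)) k :=
    HasDerivAt.comp (h₂ := Real.tanh) k (my_tanh_hasDerivAt t) hinner
  have hleft : HasDerivAt (fun x : ℝ => 2 * Real.sqrt (-x)) (2 * (1 / (2 * Real.sqrt (-k)) * (-1))) k :=
    hsq.const_mul 2
  have hmul := hleft.mul htanh
  have heq : (fun x => G x r) =ᶠ[𝓝 k] fun x => 2 * Real.sqrt (-x) * Real.tanh (Real.sqrt (-x) * r / 2) := by
    filter_upwards [Iio_mem_nhds hk] with x hx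
    have hx' : x < 0 := hx
    simp only [G, if_neg (not_lt.mpr hx'.le), if_neg hx'.ne, abs_of_neg hx']
  have hval : 2 * (1 / (2 * Real.sqrt (-k)) * (-1)) * Real.tanh t
      + 2 * Real.sqrt (-k) * ((1 - Real.tanh t ^ 2) * (1 / (2 * Real.sqrt (-k)) * (-1) * r / 2))
      = -(r / 2) * myQ t := by
    rw [myQ, hts]
    field_simp
    ring
  rw [← hval]
  exact (HasDerivAt.congr_of_eventuallyEq hmul heq)

lemma G_hasDerivAt_zero {r : ℝ} (hr : 0 < r) : HasDerivAt (fun k => G k r) (-r) 0 := by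
  rw [hasDerivAt_iff_tendsto_slope]
  rw [← nhdsLT_sup_nhdsGT (0:ℝ), tendsto_sup]
  have hG0 : G 0 r = (0:ℝ) := by simp [G]
  constructor
  · -- left: k → 0⁻
    set u : ℝ → ℝ := fun k => Real.sqrt (-k) * r / 2 with hu
    have hupos : ∀ k < (0:ℝ), 0 < u k := by
      intro k hk
      have : 0 < Real.sqrt (-k) := Real.sqrt_pos.mpr (by linarith)
      positivity
    have htu : Tendsto u (𝓝[<] (0:ℝ)) (𝓝[≠] (0:ℝ)) := by
      rw [tendsto_nhdsWithin_iff]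
      constructor
      · have hc : Continuous u := by
          fun_prop
        have : u 0 = 0 := by simp [hu]
        simpa [this] using (hc.tendsto 0).mono_left nhdsWithin_le_nhds
      · filter_upwards [self_mem_nhdsWithin] with k hk
        exact (hupos k hk).ne'
    have hslope : Tendsto (slope Real.tanh 0) (𝓝[≠] (0:ℝ)) (𝓝 1) := by
      have h := my_tanh_hasDerivAt 0
      rw [Real.tanh_zero] at h
      simpa using (hasDerivAt_iff_tendsto_slope.mp h)
    have hcomp : Tendsto (fun k => -r * slope Real.tanh 0 (u k)) (𝓝[<] (0:ℝ)) (𝓝 (-r)) := by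
      have := (hslope.comp htu).const_mul (-r)
      simpa using this
    apply hcomp.congr'
    filter_upwards [self_mem_nhdsWithin] with k hk
    have hk' : k < 0 := hk
    have hkneg : 0 < -k := by linarith
    have hs : 0 < Real.sqrt (-k) := Real.sqrt_pos.mpr hkneg
    have hksq : Real.sqrt (-k) ^ 2 = -k := Real.sq_sqrt hkneg.le
    have hGk : G k r = 2 * Real.sqrt (-k) * Real.tanh (u k) := by
      simp only [G, if_neg (not_lt.mpr hk'.le), if_neg hk'.ne, abs_of_neg hk', hu]
    rw [slope_def_field, slope_def_field, Real.tanh_zero, hG0, hGk]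
    have hu0 : u k = Real.sqrt (-k) * r / 2 := rfl
    rw [hu0]
    have hkne : k ≠ 0 := hk'.ne
    field_simp
    rw [mul_comm r (Real.sqrt (-k))]
    linear_combination (-(2:ℝ) * r * Real.tanh (Real.sqrt (-k) * r / 2)) * hksq
  · -- right: k → 0⁺
    set u : ℝ → ℝ := fun k => Real.sqrt k * r / 2 with hu
    have hupos : ∀ k > (0:ℝ), 0 < u k := by
      intro k hk
      have : 0 < Real.sqrt k := Real.sqrt_pos.mpr hk
      positivity
    have htu : Tendsto u (𝓝[>] (0:ℝ)) (𝓝[≠] (0:ℝ)) := by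
      rw [tendsto_nhdsWithin_iff]
      constructor
      · have hc : Continuous u := by fun_prop
        have : u 0 = 0 := by simp [hu]
        simpa [this] using (hc.tendsto 0).mono_left nhdsWithin_le_nhds
      · filter_upwards [self_mem_nhdsWithin] with k hk
        exact (hupos k hk).ne'
    have hslope : Tendsto (slope Real.tan 0) (𝓝[≠] (0:ℝ)) (𝓝 1) := by
      have h := Real.hasDerivAt_tan (x := 0) (by simp)
      simp only [Real.cos_zero, one_pow, div_one] at h
      simpa using (hasDerivAt_iff_tendsto_slope.mp h)
    have hcomp : Tendsto (fun k => -r * slope Real.tan 0 (u k)) (𝓝[>] (0:ℝ)) (𝓝 (-r)) := by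
      have := (hslope.comp htu).const_mul (-r)
      simpa using this
    apply hcomp.congr'
    filter_upwards [self_mem_nhdsWithin] with k hk
    have hk' : 0 < k := hk
    have hs : 0 < Real.sqrt k := Real.sqrt_pos.mpr hk'
    have hksq : Real.sqrt k ^ 2 = k := Real.sq_sqrt hk'.le
    have hGk : G k r = -2 * Real.sqrt k * Real.tan (u k) := by
      simp only [G, if_pos hk', hu]
    rw [slope_def_field, slope_def_field, Real.tan_zero, hG0, hGk]
    have hu0 : u k = Real.sqrt k * r / 2 := rfl
    rw [hu0]
    have hkne : k ≠ 0 := hk'.ne'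
    field_simp
    rw [mul_comm r (Real.sqrt k)]
    linear_combination ((2:ℝ) * r * Real.tan (Real.sqrt k * r / 2)) * hksq

noncomputable def Gd (r k : ℝ) : ℝ :=
  if 0 < k then -(r / 2) * myP (Real.sqrt k * r / 2)
  else if k = 0 then -r
  else -(r / 2) * myQ (Real.sqrt (-k) * r / 2)

lemma G_hasDerivAt {r k : ℝ} (hr : 0 < r) (hk : k < π ^ 2 / r ^ 2) :
    HasDerivAt (fun k => G k r) (Gd r k) k := by
  rcases lt_trichotomy k 0 with h | h | h
  · rw [Gd, if_neg (not_lt.mpr h.le), if_neg h.ne]; exact G_hasDerivAt_neg hr h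
  · subst h; rw [Gd, if_neg (lt_irrefl 0), if_pos rfl]; exact G_hasDerivAt_zero hr
  · rw [Gd, if_pos h]; exact G_hasDerivAt_pos hr h hk

lemma myT_mem {r k : ℝ} (hr : 0 < r) (h1 : 0 < k) (h2 : k < π ^ 2 / r ^ 2) :
    Real.sqrt k * r / 2 ∈ Ioo 0 (π / 2) := by
  have hs : 0 < Real.sqrt k := Real.sqrt_pos.mpr h1
  exact ⟨by positivity, my_sqrt_bound hr h1 h2⟩

lemma Gd_le_negr {r k : ℝ} (hr : 0 < r) (h1 : 0 < k) (h2 : k < π ^ 2 / r ^ 2) :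
    Gd r k ≤ -r := by
  rw [Gd, if_pos h1]
  have hm := myT_mem hr h1 h2
  have := myP_ge_two hm.1 hm.2
  nlinarith

lemma negr_le_Gd {r k : ℝ} (hr : 0 < r) (h1 : k < 0) : -r ≤ Gd r k := by
  rw [Gd, if_neg (not_lt.mpr h1.le), if_neg h1.ne]
  have hs : 0 < Real.sqrt (-k) := Real.sqrt_pos.mpr (by linarith)
  have ht : 0 < Real.sqrt (-k) * r / 2 := by positivity
  have := myQ_le_two ht
  nlinarith

lemma Gd_antitone {r : ℝ} (hr : 0 < r) : AntitoneOn (Gd r) (Iio (π ^ 2 / r ^ 2)) := by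
  intro x hx y hy hxy
  have hx' : x < π ^ 2 / r ^ 2 := hx
  have hy' : y < π ^ 2 / r ^ 2 := hy
  rcases lt_trichotomy x 0 with hxn | hx0 | hxp
  · rcases lt_trichotomy y 0 with hyn | hy0 | hyp
    · -- both negative
      rw [Gd, Gd, if_neg (not_lt.mpr hyn.le), if_neg hyn.ne,
        if_neg (not_lt.mpr hxn.le), if_neg hxn.ne]
      have hsx : 0 < Real.sqrt (-x) := Real.sqrt_pos.mpr (by linarith)
      have hsy : 0 < Real.sqrt (-y) := Real.sqrt_pos.mpr (by linarith)
      have hts : Real.sqrt (-y) ≤ Real.sqrt (-x) := Real.sqrt_le_sqrt (by linarith)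
      have htxy : Real.sqrt (-y) * r / 2 ≤ Real.sqrt (-x) * r / 2 := by nlinarith
      have hq := myQ_antitone (mem_Ioi.mpr (by positivity : (0:ℝ) < Real.sqrt (-y) * r / 2))
        (mem_Ioi.mpr (by positivity : (0:ℝ) < Real.sqrt (-x) * r / 2)) htxy
      nlinarith
    · subst hy0
      rw [Gd, if_neg (lt_irrefl 0), if_pos rfl]
      exact negr_le_Gd hr hxn
    · calc Gd r y ≤ -r := Gd_le_negr hr hyp hy'
        _ ≤ Gd r x := negr_le_Gd hr hxn
  · subst hx0
    have hGd0 : Gd r 0 = -r := by rw [Gd, if_neg (lt_irrefl 0), if_pos rfl]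
    rcases eq_or_lt_of_le hxy with h | h
    · rw [← h]
    · rw [hGd0]
      exact Gd_le_negr hr h hy'
  · have hyp : 0 < y := lt_of_lt_of_le hxp hxy
    rw [Gd, Gd, if_pos hyp, if_pos hxp]
    have hts : Real.sqrt x ≤ Real.sqrt y := Real.sqrt_le_sqrt hxy
    have hsx : 0 < Real.sqrt x := Real.sqrt_pos.mpr hxp
    have htxy : Real.sqrt x * r / 2 ≤ Real.sqrt y * r / 2 := by nlinarith
    have hp := myP_monotone (myT_mem hr hxp hx') (myT_mem hr hyp hy') htxy
    nlinarith

lemma G_concaveOn {r : ℝ} (hr : 0 < r) :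
    ConcaveOn ℝ (Iio (π ^ 2 / r ^ 2)) (fun k => G k r) := by
  apply AntitoneOn.concaveOn_of_deriv (convex_Iio _)
  · intro k hk
    exact (G_hasDerivAt hr hk).continuousAt.continuousWithinAt
  · rw [interior_Iio]
    intro k hk
    exact (G_hasDerivAt hr hk).differentiableAt.differentiableWithinAt
  · rw [interior_Iio]
    intro x hx y hy hxy
    rw [(G_hasDerivAt hr hx).deriv, (G_hasDerivAt hr hy).deriv]
    exact Gd_antitone hr hx hy hxy


/-- For fixed `r > 0`, the function `k ↦ G(k, r)` is concave on `(−∞, π²/r²)`. -/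
theorem G_concave_in_k (r : ℝ) (hr : 0 < r) :
    ∀ k₁ k₂ : ℝ, k₁ < π ^ 2 / r ^ 2 → k₂ < π ^ 2 / r ^ 2 →
      ∀ l : ℝ, 0 ≤ l → l ≤ 1 →
        l * G k₁ r + (1 - l) * G k₂ r ≤ G (l * k₁ + (1 - l) * k₂) r := by
  intro k₁ k₂ h₁ h₂ l hl0 hl1
  have h := (G_concaveOn hr).2 (mem_Iio.mpr h₁) (mem_Iio.mpr h₂) hl0
    (show (0:ℝ) ≤ 1 - l by linarith) (show l + (1 - l) = 1 by ring)
  simpa [smul_eq_mul] using h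
end

section
/- Let m ≥ 2 be an integer, let k₁, k₂ be real numbers, and let r > 0 satisfy 4k₁ < π²/r² and k₂ < π²/r². Then (2m−2)·G(k₂, r) + 2·G(k₁, 2r) ≤ (2m−1)·G((4k₁ + (2m−2)k₂)/(2m−1), r). (This is the inequality showing that the Kähler drift term (2m−2)G(k₂,r) + 2G(k₁,2r) is dominated by the Riemannian drift term with the averaged Ricci lower bound 4k₁ + (2m−2)k₂ in real dimension 2m.) -/
open Real

namespace KahlerAux

noncomputable def phi (k r : ℝ) : ℝ :=
  if 0 < k then Real.cos (Real.sqrt k * r / 2) else Real.cosh (Real.sqrt (-k) * r / 2)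

lemma G_zero (k : ℝ) : G k 0 = 0 := by
  unfold G; split_ifs <;> simp

lemma G_pos_eq {k : ℝ} (hk : 0 < k) (r : ℝ) :
    G k r = -2 * Real.sqrt k * Real.tan (Real.sqrt k * r / 2) := by
  simp [G, hk]

lemma G_nonpos_eq {k : ℝ} (hk : k ≤ 0) (r : ℝ) :
    G k r = 2 * Real.sqrt (-k) * Real.tanh (Real.sqrt (-k) * r / 2) := by
  rcases eq_or_lt_of_le hk with h | h
  · simp [G, h]
  · rw [G, if_neg (by linarith), if_neg (by linarith), abs_of_neg h]

lemma hasDerivAt_tanh (x : ℝ) : HasDerivAt Real.tanh (1 / Real.cosh x ^ 2) x := by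
  have h : HasDerivAt (fun y => Real.sinh y / Real.cosh y)
      ((Real.cosh x * Real.cosh x - Real.sinh x * Real.sinh x) / Real.cosh x ^ 2) x :=
    (Real.hasDerivAt_sinh x).div (Real.hasDerivAt_cosh x) (Real.cosh_pos x).ne'
  have hfun : (fun y => Real.sinh y / Real.cosh y) = Real.tanh := by
    funext y; rw [Real.tanh_eq_sinh_div_cosh]
  rw [hfun] at h
  convert h using 1
  have hnum : Real.cosh x * Real.cosh x - Real.sinh x * Real.sinh x = 1 := by
    nlinarith [Real.cosh_sq_sub_sinh_sq x]
  rw [hnum]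

lemma sqrt_mul_lt_pi {k r₀ : ℝ} (hr₀ : 0 < r₀) (hk : k < π ^ 2 / r₀ ^ 2) {r : ℝ}
    (hr : r ∈ Set.Icc 0 r₀) : Real.sqrt k * r < π := by
  have h1 : Real.sqrt k < π / r₀ := by
    rw [Real.sqrt_lt' (div_pos Real.pi_pos hr₀)]
    rwa [div_pow]
  have h2 : Real.sqrt k * r ≤ Real.sqrt k * r₀ :=
    mul_le_mul_of_nonneg_left hr.2 (Real.sqrt_nonneg k)
  calc Real.sqrt k * r ≤ Real.sqrt k * r₀ := h2
    _ < (π / r₀) * r₀ := by exact mul_lt_mul_of_pos_right h1 hr₀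
    _ = π := by field_simp

lemma cos_pos_aux {k r₀ : ℝ} (hr₀ : 0 < r₀) (hk : k < π ^ 2 / r₀ ^ 2) {r : ℝ}
    (hr : r ∈ Set.Icc 0 r₀) : 0 < Real.cos (Real.sqrt k * r / 2) := by
  apply Real.cos_pos_of_mem_Ioo
  constructor
  · have := mul_nonneg (Real.sqrt_nonneg k) hr.1
    nlinarith [Real.pi_pos]
  · nlinarith [sqrt_mul_lt_pi hr₀ hk hr]

lemma phi_pos {k r₀ : ℝ} (hr₀ : 0 < r₀) (hk : k < π ^ 2 / r₀ ^ 2) {r : ℝ}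
    (hr : r ∈ Set.Icc 0 r₀) : 0 < phi k r := by
  unfold phi
  split_ifs with h
  · exact cos_pos_aux hr₀ hk hr
  · exact Real.cosh_pos _

lemma hasDerivAt_G {k r₀ : ℝ} (hr₀ : 0 < r₀) (hk : k < π ^ 2 / r₀ ^ 2) {r : ℝ}
    (hr : r ∈ Set.Icc 0 r₀) :
    HasDerivAt (fun t => G k t) (-k - (G k r) ^ 2 / 4) r := by
  rcases le_or_gt k 0 with h | h
  · -- nonpositive case: tanh
    set s := Real.sqrt (-k) with hs
    have hfun : (fun t => G k t) = fun t => 2 * s * Real.tanh (s * t / 2) := by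
      funext t; exact G_nonpos_eq h t
    rw [hfun, G_nonpos_eq h r]
    have hθ : HasDerivAt (fun t : ℝ => s * t / 2) (s / 2) r := by
      simpa using ((hasDerivAt_id r).const_mul s).div_const 2
    have htanh := (hasDerivAt_tanh (s * r / 2)).comp r hθ
    have h2 := htanh.const_mul (2 * s)
    refine h2.congr_deriv ?_
    rw [← hs]
    have hs2 : s ^ 2 = -k := Real.sq_sqrt (by linarith)
    have hch := Real.cosh_pos (s * r / 2)
    rw [Real.tanh_eq_sinh_div_cosh]
    have hid := Real.cosh_sq_sub_sinh_sq (s * r / 2)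
    field_simp
    linear_combination (4 * Real.cosh (s * r / 2) ^ 2) * hs2 -
      (4 * s ^ 2) * hid
  · -- positive case: tan
    set s := Real.sqrt k with hs
    have hcos : 0 < Real.cos (s * r / 2) := cos_pos_aux hr₀ hk hr
    have hfun : (fun t => G k t) = fun t => -2 * s * Real.tan (s * t / 2) := by
      funext t; exact G_pos_eq h t
    rw [hfun, G_pos_eq h r]
    have hθ : HasDerivAt (fun t : ℝ => s * t / 2) (s / 2) r := by
      simpa using ((hasDerivAt_id r).const_mul s).div_const 2
    have htan := (Real.hasDerivAt_tan hcos.ne').comp r hθ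
    have h2 := htan.const_mul (-2 * s)
    refine h2.congr_deriv ?_
    rw [← hs]
    have hs2 : s ^ 2 = k := Real.sq_sqrt h.le
    rw [Real.tan_eq_sin_div_cos]
    have hid := Real.sin_sq_add_cos_sq (s * r / 2)
    field_simp
    linear_combination (-4 * Real.cos (s * r / 2) ^ 2) * hs2 +
      (4 * s ^ 2) * hid

lemma hasDerivAt_phi {k r₀ : ℝ} (hr₀ : 0 < r₀) (hk : k < π ^ 2 / r₀ ^ 2) {r : ℝ}
    (hr : r ∈ Set.Icc 0 r₀) :
    HasDerivAt (fun t => phi k t) (G k r * phi k r / 4) r := by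
  rcases le_or_gt k 0 with h | h
  · set s := Real.sqrt (-k) with hs
    have hfun : (fun t => phi k t) = fun t => Real.cosh (s * t / 2) := by
      funext t; rw [phi, if_neg (by linarith)]
    have hphir : phi k r = Real.cosh (s * r / 2) := by rw [phi, if_neg (by linarith)]
    rw [hfun, hphir, G_nonpos_eq h r]
    have hθ : HasDerivAt (fun t : ℝ => s * t / 2) (s / 2) r := by
      simpa using ((hasDerivAt_id r).const_mul s).div_const 2
    have hch := (Real.hasDerivAt_cosh (s * r / 2)).comp r hθ
    refine hch.congr_deriv ?_
    rw [← hs]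
    rw [Real.tanh_eq_sinh_div_cosh]
    have hchp := Real.cosh_pos (s * r / 2)
    field_simp
    ring
  · set s := Real.sqrt k with hs
    have hcos : 0 < Real.cos (s * r / 2) := cos_pos_aux hr₀ hk hr
    have hfun : (fun t => phi k t) = fun t => Real.cos (s * t / 2) := by
      funext t; rw [phi, if_pos h]
    have hphir : phi k r = Real.cos (s * r / 2) := by rw [phi, if_pos h]
    rw [hfun, hphir, G_pos_eq h r]
    have hθ : HasDerivAt (fun t : ℝ => s * t / 2) (s / 2) r := by
      simpa using ((hasDerivAt_id r).const_mul s).div_const 2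
    have hc := (Real.hasDerivAt_cos (s * r / 2)).comp r hθ
    refine hc.congr_deriv ?_
    rw [← hs]
    rw [Real.tan_eq_sin_div_cos]
    field_simp
    ring

end KahlerAux

namespace KahlerAux

lemma G_concave {r₀ : ℝ} (hr₀ : 0 < r₀) {a b lam mu : ℝ} (hla : 0 ≤ lam) (hmu : 0 ≤ mu)
    (hlm : lam + mu = 1) (ha : a < π ^ 2 / r₀ ^ 2) (hb : b < π ^ 2 / r₀ ^ 2) :
    lam * G a r₀ + mu * G b r₀ ≤ G (lam * a + mu * b) r₀ := by
  set c := lam * a + mu * b with hcdef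
  have hc : c < π ^ 2 / r₀ ^ 2 := by
    rcases eq_or_lt_of_le hla with h | h
    · have hmu1 : mu = 1 := by linarith
      rw [hcdef, ← h, hmu1]; simpa using hb
    · have hsum : lam * (π ^ 2 / r₀ ^ 2) + mu * (π ^ 2 / r₀ ^ 2) = π ^ 2 / r₀ ^ 2 := by
        linear_combination (π ^ 2 / r₀ ^ 2) * hlm
      rw [hcdef]
      have h1 := mul_lt_mul_of_pos_left ha h
      have h2 := mul_le_mul_of_nonneg_left hb.le hmu
      linarith
  set E : ℝ → ℝ := fun t =>
    (G c t - lam * G a t - mu * G b t) * (phi c t * phi a t ^ lam * phi b t ^ mu) with hEdef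
  have key : ∀ r ∈ Set.Icc (0:ℝ) r₀, HasDerivAt E
      ((phi c r * phi a r ^ lam * phi b r ^ mu) *
        (lam * (G a r) ^ 2 + mu * (G b r) ^ 2 - (lam * G a r + mu * G b r) ^ 2) / 4) r := by
    intro r hr
    have hPa := phi_pos hr₀ ha hr
    have hPb := phi_pos hr₀ hb hr
    have hPc := phi_pos hr₀ hc hr
    have hda := hasDerivAt_G hr₀ ha hr
    have hdb := hasDerivAt_G hr₀ hb hr
    have hdc := hasDerivAt_G hr₀ hc hr
    have hpa := hasDerivAt_phi hr₀ ha hr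
    have hpb := hasDerivAt_phi hr₀ hb hr
    have hpc := hasDerivAt_phi hr₀ hc hr
    have hQa : HasDerivAt (fun t => phi a t ^ lam) (lam * G a r / 4 * phi a r ^ lam) r := by
      have h := hpa.rpow_const (p := lam) (Or.inl hPa.ne')
      convert h using 1
      rw [Real.rpow_sub_one hPa.ne']
      field_simp
    have hQb : HasDerivAt (fun t => phi b t ^ mu) (mu * G b r / 4 * phi b r ^ mu) r := by
      have h := hpb.rpow_const (p := mu) (Or.inl hPb.ne')
      convert h using 1
      rw [Real.rpow_sub_one hPb.ne']
      field_simp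
    have hD : HasDerivAt (fun t => G c t - lam * G a t - mu * G b t)
        ((-c - (G c r) ^ 2 / 4) - lam * (-a - (G a r) ^ 2 / 4) -
          mu * (-b - (G b r) ^ 2 / 4)) r :=
      (hdc.sub (hda.const_mul lam)).sub (hdb.const_mul mu)
    have hPhi := (hpc.mul hQa).mul hQb
    have hE := hD.mul hPhi
    rw [hEdef]
    refine hE.congr_deriv ?_
    simp only [Pi.mul_apply]
    rw [hcdef]
    ring
  have hE0 : E 0 = 0 := by simp [hEdef, G_zero]
  have hcont : ContinuousOn E (Set.Icc 0 r₀) := fun r hr =>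
    ((key r hr).continuousAt).continuousWithinAt
  have hdiff : DifferentiableOn ℝ E (interior (Set.Icc 0 r₀)) := by
    rw [interior_Icc]
    exact fun r hr =>
      ((key r (Set.Ioo_subset_Icc_self hr)).differentiableAt).differentiableWithinAt
  have hderiv : ∀ x ∈ interior (Set.Icc (0:ℝ) r₀), 0 ≤ deriv E x := by
    rw [interior_Icc]
    intro x hx
    have hx' := Set.Ioo_subset_Icc_self hx
    rw [(key x hx').deriv]
    have hΦ : 0 < phi c x * phi a x ^ lam * phi b x ^ mu :=
      mul_pos (mul_pos (phi_pos hr₀ hc hx') (Real.rpow_pos_of_pos (phi_pos hr₀ ha hx') lam))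
        (Real.rpow_pos_of_pos (phi_pos hr₀ hb hx') mu)
    have hbr : lam * (G a x) ^ 2 + mu * (G b x) ^ 2 - (lam * G a x + mu * G b x) ^ 2 =
        lam * mu * (G a x - G b x) ^ 2 := by
      linear_combination (-(lam * (G a x) ^ 2 + mu * (G b x) ^ 2)) * hlm
    rw [hbr]
    have := mul_nonneg (mul_nonneg hla hmu) (sq_nonneg (G a x - G b x))
    positivity
  have hmono := monotoneOn_of_deriv_nonneg (convex_Icc 0 r₀) hcont hdiff hderiv
  have hle : E 0 ≤ E r₀ := hmono ⟨le_refl 0, hr₀.le⟩ ⟨hr₀.le, le_refl r₀⟩ hr₀.le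
  rw [hE0] at hle
  have hEr : E r₀ = (G c r₀ - lam * G a r₀ - mu * G b r₀) *
      (phi c r₀ * phi a r₀ ^ lam * phi b r₀ ^ mu) := by rw [hEdef]
  rw [hEr] at hle
  have hΦ : 0 < phi c r₀ * phi a r₀ ^ lam * phi b r₀ ^ mu :=
    mul_pos (mul_pos (phi_pos hr₀ hc ⟨hr₀.le, le_refl r₀⟩)
        (Real.rpow_pos_of_pos (phi_pos hr₀ ha ⟨hr₀.le, le_refl r₀⟩) lam))
      (Real.rpow_pos_of_pos (phi_pos hr₀ hb ⟨hr₀.le, le_refl r₀⟩) mu)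
  nlinarith [hle, hΦ]

lemma sqrt_four : Real.sqrt 4 = 2 := by
  rw [show (4:ℝ) = 2 ^ 2 by norm_num, Real.sqrt_sq (by norm_num : (0:ℝ) ≤ 2)]

lemma G_double (k r : ℝ) : G (4 * k) r = 2 * G k (2 * r) := by
  rcases lt_trichotomy k 0 with h | h | h
  · have h4 : 4 * k < 0 := by linarith
    rw [G_nonpos_eq h4.le, G_nonpos_eq h.le]
    have hs : Real.sqrt (-(4 * k)) = 2 * Real.sqrt (-k) := by
      rw [show -(4 * k) = 4 * (-k) by ring, Real.sqrt_mul (by norm_num) (-k), sqrt_four]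
    rw [hs, show 2 * Real.sqrt (-k) * r / 2 = Real.sqrt (-k) * (2 * r) / 2 by ring]
    ring
  · subst h
    norm_num [G]
  · have h4 : 0 < 4 * k := by linarith
    rw [G_pos_eq h4, G_pos_eq h]
    have hs : Real.sqrt (4 * k) = 2 * Real.sqrt k := by
      rw [Real.sqrt_mul (by norm_num) k, sqrt_four]
    rw [hs, show 2 * Real.sqrt k * r / 2 = Real.sqrt k * (2 * r) / 2 by ring]
    ring

end KahlerAux

/-- The Kähler drift term `(2m−2)G(k₂,r) + 2G(k₁,2r)` is dominated by the Riemannian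
drift term with the averaged Ricci lower bound `4k₁ + (2m−2)k₂` in real dimension `2m`. -/
theorem kahler_drift_comparison (m : ℕ) (hm : 2 ≤ m) (k₁ k₂ r : ℝ) (hr : 0 < r)
    (h₁ : 4 * k₁ < π ^ 2 / r ^ 2) (h₂ : k₂ < π ^ 2 / r ^ 2) :
    (2 * (m : ℝ) - 2) * G k₂ r + 2 * G k₁ (2 * r) ≤
      (2 * (m : ℝ) - 1) * G ((4 * k₁ + (2 * (m : ℝ) - 2) * k₂) / (2 * (m : ℝ) - 1)) r := by
  have hm' : (2:ℝ) ≤ (m : ℝ) := by exact_mod_cast hm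
  set N : ℝ := 2 * (m : ℝ) - 1 with hNdef
  have hN : 0 < N := by rw [hNdef]; linarith
  have hNne : N ≠ 0 := hN.ne'
  have hla : (0:ℝ) ≤ 1 / N := by positivity
  have hmu : (0:ℝ) ≤ (2 * (m : ℝ) - 2) / N := by
    apply div_nonneg _ hN.le; linarith
  have hlm : 1 / N + (2 * (m : ℝ) - 2) / N = 1 := by
    rw [← add_div, hNdef]
    rw [div_eq_one_iff_eq (by rw [← hNdef]; exact hNne)]
    ring
  have key := KahlerAux.G_concave hr hla hmu hlm h₁ h₂
  have hceq : 1 / N * (4 * k₁) + (2 * (m : ℝ) - 2) / N * k₂ =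
      (4 * k₁ + (2 * (m : ℝ) - 2) * k₂) / N := by
    field_simp
  rw [hceq] at key
  rw [← KahlerAux.G_double k₁ r]
  calc (2 * (m : ℝ) - 2) * G k₂ r + G (4 * k₁) r
      = N * (1 / N * G (4 * k₁) r + (2 * (m : ℝ) - 2) / N * G k₂ r) := by
        field_simp; ring
    _ ≤ N * G ((4 * k₁ + (2 * (m : ℝ) - 2) * k₂) / N) r :=
        mul_le_mul_of_nonneg_left key hN.le
end

section
/- Let k > 0, let 0 < r < π/√k, and let 𝔧(t) = cos(√k t) + ((1 - cos(√k r))/sin(√k r)) · sin(√k t) for t ∈ [0, r]. Then for any C¹ function u : [0, r] → ℝ with u(0) = 𝔧(0) and u(r) = 𝔧(r), one has ∫₀^r (𝔧'(t)² − k·𝔧(t)²) dt ≤ ∫₀^r (u'(t)² − k·u(t)²) dt. -/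
open Real

/-- Index lemma in one dimension: for `k > 0` and `0 < r < π/√k`, the comparison
function `𝔧(t) = cos(√k t) + ((1 - cos(√k r))/sin(√k r)) · sin(√k t)` minimizes the
index-form integral `∫₀^r (u'(t)² − k u(t)²) dt` among `C¹` functions `u` on `[0, r]`
with the same boundary values. -/
theorem index_lemma_one_dimensional (k r : ℝ) (hk : 0 < k) (hr : 0 < r)
    (hr' : r < π / Real.sqrt k) (j : ℝ → ℝ)
    (hj : ∀ t, j t = Real.cos (Real.sqrt k * t) +
      ((1 - Real.cos (Real.sqrt k * r)) / Real.sin (Real.sqrt k * r)) *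
        Real.sin (Real.sqrt k * t)) :
    ∀ u : ℝ → ℝ, ContDiffOn ℝ 1 u (Set.Icc 0 r) → u 0 = j 0 → u r = j r →
      ∫ t in (0 : ℝ)..r, ((deriv j t) ^ 2 - k * (j t) ^ 2) ≤
        ∫ t in (0 : ℝ)..r, ((derivWithin u (Set.Icc 0 r) t) ^ 2 - k * (u t) ^ 2) := by
  intro u hu hu0 hur
  set s := Real.sqrt k with hs_def
  have hs : 0 < s := Real.sqrt_pos.mpr hk
  have hk' : s ^ 2 = k := Real.sq_sqrt hk.le
  set a := s * r with ha_def
  set L := (1 - Real.cos a) / Real.sin a with hL_def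
  have ha : 0 < a := mul_pos hs hr
  have haπ : a < π := by
    have h := (lt_div_iff₀ hs).mp hr'
    rw [ha_def]; linarith [mul_comm s r]
  have hsina : 0 < Real.sin a := Real.sin_pos_of_pos_of_lt_pi ha haπ
  have hpi := Real.pi_pos
  have hcos2 : 0 < Real.cos (a / 2) :=
    Real.cos_pos_of_mem_Ioo ⟨by linarith, by linarith⟩
  have hsin2 : 0 < Real.sin (a / 2) :=
    Real.sin_pos_of_pos_of_lt_pi (by linarith) (by linarith)
  have hLeq : L * Real.cos (a / 2) = Real.sin (a / 2) := by
    have h1 : Real.sin a = 2 * Real.sin (a / 2) * Real.cos (a / 2) := by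
      have h := Real.sin_two_mul (a / 2)
      rw [show 2 * (a / 2) = a by ring] at h
      exact h
    have h2 : 1 - Real.cos a = 2 * Real.sin (a / 2) ^ 2 := by
      have hc := Real.cos_two_mul (a / 2)
      rw [show 2 * (a / 2) = a by ring] at hc
      have hsc := Real.sin_sq_add_cos_sq (a / 2)
      nlinarith
    rw [hL_def, h2, h1]
    field_simp
  -- positivity of j on [0, r]
  have hjpos : ∀ t ∈ Set.Icc (0:ℝ) r, 0 < j t := by
    intro t ht
    rw [hj t]
    have h1 : (Real.cos (s * t) + L * Real.sin (s * t)) * Real.cos (a / 2)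
        = Real.cos (s * t - a / 2) := by
      rw [Real.cos_sub]
      linear_combination Real.sin (s * t) * hLeq
    have hst0 : 0 ≤ s * t := mul_nonneg hs.le ht.1
    have hsta : s * t ≤ a := by
      rw [ha_def]; exact mul_le_mul_of_nonneg_left ht.2 hs.le
    have h2 : 0 < Real.cos (s * t - a / 2) :=
      Real.cos_pos_of_mem_Ioo ⟨by linarith, by linarith⟩
    nlinarith
  have hjne : ∀ t ∈ Set.Icc (0:ℝ) r, j t ≠ 0 := fun t ht => (hjpos t ht).ne'
  -- derivative of j
  set jd : ℝ → ℝ := fun t => s * (L * Real.cos (s * t) - Real.sin (s * t)) with hjd_def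
  have hmul : ∀ t : ℝ, HasDerivAt (fun t => s * t) s t := by
    intro t; simpa using (hasDerivAt_id t).const_mul s
  have hJd : ∀ t : ℝ, HasDerivAt j (jd t) t := by
    intro t
    have h : HasDerivAt (fun t => Real.cos (s * t) + L * Real.sin (s * t))
        (-Real.sin (s * t) * s + L * (Real.cos (s * t) * s)) t :=
      ((hmul t).cos).add (((hmul t).sin).const_mul L)
    have h' := h.congr_of_eventuallyEq (Filter.Eventually.of_forall hj)
    refine h'.congr_deriv ?_
    rw [hjd_def]; ring
  have hjdd : ∀ t : ℝ, HasDerivAt jd (-k * j t) t := by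
    intro t
    have h : HasDerivAt (fun t => s * (L * Real.cos (s * t) - Real.sin (s * t)))
        (s * (L * (-Real.sin (s * t) * s) - Real.cos (s * t) * s)) t :=
      ((((hmul t).cos).const_mul L).sub ((hmul t).sin)).const_mul s
    convert h using 1
    rw [hj t]
    linear_combination (Real.cos (s * t) + L * Real.sin (s * t)) * hk'
  have hjcont : ContinuousOn j (Set.Icc 0 r) :=
    fun t _ => ((hJd t).continuousAt).continuousWithinAt
  have hjdcont : Continuous jd := by
    rw [hjd_def]; fun_prop
  -- logarithmic derivative φ = j'/j
  set φ : ℝ → ℝ := fun t => jd t / j t with hφ_def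
  have hφcont : ContinuousOn φ (Set.Icc 0 r) :=
    hjdcont.continuousOn.div hjcont hjne
  have hφd : ∀ t ∈ Set.Ioo (0:ℝ) r, HasDerivAt φ (-k - (φ t) ^ 2) t := by
    intro t ht
    have hne := hjne t (Set.Ioo_subset_Icc_self ht)
    have h := (hjdd t).div (hJd t) hne
    refine h.congr_deriv ?_
    rw [hφ_def]
    field_simp
  -- Key identity: index form = ∫ (w' - φ w)² + boundary term
  have key : ∀ w gw : ℝ → ℝ, ContinuousOn w (Set.Icc 0 r) →
      ContinuousOn gw (Set.Icc 0 r) →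
      (∀ t ∈ Set.Ioo (0:ℝ) r, HasDerivAt w (gw t) t) →
      ∫ t in (0:ℝ)..r, (gw t ^ 2 - k * w t ^ 2) =
        (∫ t in (0:ℝ)..r, (gw t - φ t * w t) ^ 2) +
          (φ r * (w r) ^ 2 - φ 0 * (w 0) ^ 2) := by
    intro w gw hw hgw hwd
    set F : ℝ → ℝ := fun t => φ t * (w t) ^ 2 with hF_def
    set D : ℝ → ℝ := fun t => (-k - φ t ^ 2) * w t ^ 2 + φ t * (2 * w t * gw t)
      with hD_def
    have hFd : ∀ t ∈ Set.Ioo (0:ℝ) r, HasDerivAt F (D t) t := by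
      intro t ht
      have h := (hφd t ht).mul ((hwd t ht).pow 2)
      refine h.congr_deriv ?_
      rw [hD_def, Pi.pow_apply]; ring
    have hFcont : ContinuousOn F (Set.Icc 0 r) := hφcont.mul (hw.pow 2)
    have hDcont : ContinuousOn D (Set.Icc 0 r) := by
      apply ContinuousOn.add
      · exact (continuousOn_const.sub (hφcont.pow 2)).mul (hw.pow 2)
      · exact hφcont.mul ((continuousOn_const.mul hw).mul hgw)
    have hIccUicc : Set.uIcc (0:ℝ) r = Set.Icc 0 r := Set.uIcc_of_le hr.le
    have hDint : IntervalIntegrable D MeasureTheory.volume 0 r :=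
      hDcont.intervalIntegrable_of_Icc hr.le
    have hFTC : ∫ t in (0:ℝ)..r, D t = F r - F 0 :=
      intervalIntegral.integral_eq_sub_of_hasDeriv_right_of_le hr.le hFcont
        (fun t ht => (hFd t ht).hasDerivWithinAt) hDint
    have hInt1 : IntervalIntegrable (fun t => (gw t - φ t * w t) ^ 2)
        MeasureTheory.volume 0 r :=
      ((hgw.sub (hφcont.mul hw)).pow 2).intervalIntegrable_of_Icc hr.le
    have hcongr : ∫ t in (0:ℝ)..r, (gw t ^ 2 - k * w t ^ 2) =
        ∫ t in (0:ℝ)..r, ((gw t - φ t * w t) ^ 2 + D t) := by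
      apply intervalIntegral.integral_congr
      intro t _
      rw [hD_def]; ring
    rw [hcongr, intervalIntegral.integral_add hInt1 hDint, hFTC, hF_def]
  -- apply to j
  have hderivj : deriv j = jd := funext fun t => (hJd t).deriv
  have hLHS : ∫ t in (0:ℝ)..r, ((deriv j t) ^ 2 - k * (j t) ^ 2) =
      (φ r * (j r) ^ 2 - φ 0 * (j 0) ^ 2) := by
    rw [hderivj]
    rw [key j jd hjcont hjdcont.continuousOn (fun t _ => hJd t)]
    have hzero : ∫ t in (0:ℝ)..r, (jd t - φ t * j t) ^ 2 = 0 := by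
      have hz : ∫ t in (0:ℝ)..r, (jd t - φ t * j t) ^ 2
          = ∫ t in (0:ℝ)..r, (0:ℝ) := by
        apply intervalIntegral.integral_congr
        intro t ht
        rw [Set.uIcc_of_le hr.le] at ht
        have hne := hjne t ht
        rw [hφ_def]
        field_simp
        ring
      simpa using hz
    rw [hzero]; ring
  -- apply to u
  set g : ℝ → ℝ := derivWithin u (Set.Icc 0 r) with hg_def
  have hgcont : ContinuousOn g (Set.Icc 0 r) :=
    hu.continuousOn_derivWithin (uniqueDiffOn_Icc hr) le_rfl
  have hud : ∀ t ∈ Set.Ioo (0:ℝ) r, HasDerivAt u (g t) t := by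
    intro t ht
    have hd : DifferentiableWithinAt ℝ u (Set.Icc 0 r) t :=
      (hu.differentiableOn one_ne_zero) t (Set.Ioo_subset_Icc_self ht)
    exact hd.hasDerivWithinAt.hasDerivAt (Icc_mem_nhds ht.1 ht.2)
  have hucont : ContinuousOn u (Set.Icc 0 r) := hu.continuousOn
  have hRHS : ∫ t in (0:ℝ)..r, (g t ^ 2 - k * (u t) ^ 2) =
      (∫ t in (0:ℝ)..r, (g t - φ t * u t) ^ 2) +
        (φ r * (j r) ^ 2 - φ 0 * (j 0) ^ 2) := by
    rw [key u g hucont hgcont hud, hu0, hur]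
  have hnn : 0 ≤ ∫ t in (0:ℝ)..r, (g t - φ t * u t) ^ 2 :=
    intervalIntegral.integral_nonneg hr.le (fun t _ => sq_nonneg _)
  rw [hLHS]
  calc φ r * (j r) ^ 2 - φ 0 * (j 0) ^ 2
      ≤ (∫ t in (0:ℝ)..r, (g t - φ t * u t) ^ 2) +
          (φ r * (j r) ^ 2 - φ 0 * (j 0) ^ 2) := by linarith
    _ = _ := hRHS.symm
end
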